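/- arXiv:2104.13213 — 2 statements merged into one kernel-verified Lean document; each statement's English description precedes it below -/
import Mathlib

section
/- If a tuple w̄ ∈ W̃^𝒞 (resp. μ̄ ∈ V^𝒞) is quasi-admissible and regular, then it is admissible. -/
open scoped Classical

noncomputable section

/-- A (reduced, crystallographic) root system `Φ` in the dual of a real vector space `V`,
together with a chosen coroot `α̌ ∈ V` for every root `α`. -/
structure RootSystemData (V : Type*) [AddCommGroup V] [Module ℝ V] where
  roots : Set (Module.Dual ℝ V)
  coroot : Module.Dual ℝ V → V
  finite : roots.Finite
  ne_zero : ∀ α ∈ roots, α ≠ 0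
  root_coroot_two : ∀ α ∈ roots, α (coroot α) = 2
  reflect_mem : ∀ α ∈ roots, ∀ β ∈ roots, β - β (coroot α) • α ∈ roots
  crystallographic : ∀ α ∈ roots, ∀ β ∈ roots, ∃ n : ℤ, β (coroot α) = (n : ℝ)
  reduced : ∀ α ∈ roots, ∀ c : ℝ, c • α ∈ roots → c = 1 ∨ c = -1
  span_top : Submodule.span ℝ roots = ⊤

section
variable {V : Type*} [AddCommGroup V] [Module ℝ V]

/-- The simple elements of a positive system `P`: elements which are not sums of two
elements of `P`. -/
def simplesOf (P : Set (Module.Dual ℝ V)) : Set (Module.Dual ℝ V) :=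
  {α | α ∈ P ∧ ¬∃ β ∈ P, ∃ γ ∈ P, α = β + γ}

/-- The affine root `(α, n)` viewed as the affine function `x ↦ α(x) + n`. -/
def aev (α : Module.Dual ℝ V) (n : ℤ) : V → ℝ := fun x => α x + (n : ℝ)

/-- `π : W̃ → Λ`, `w ↦ w(0)`. -/
def piL (w : Equiv.Perm V) : V := w 0

/-- Translation by `μ`, as an element of the group of permutations of `V`. -/
def transl (μ : V) : Equiv.Perm V := Equiv.addLeft μ

end

namespace RootSystemData

variable {V : Type*} [AddCommGroup V] [Module ℝ V]

variable (RS : RootSystemData V)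

/-- A point is regular if it lies on no root hyperplane. -/
def IsRegularPt (x : V) : Prop := ∀ α ∈ RS.roots, α x ≠ 0

/-- Weyl chambers of `Φ`: connected components of the set of regular points,
described by the strict sign pattern of a regular point. -/
def IsChamber (C : Set V) : Prop :=
  ∃ v, RS.IsRegularPt v ∧ C = {x | ∀ α ∈ RS.roots, 0 < α v → 0 < α x}

/-- The type `𝒞` of Weyl chambers. -/
abbrev ChamberT := {C : Set V // RS.IsChamber C}

/-- The set `Φ_C` of `C`-positive roots. -/
def pos (C : Set V) : Set (Module.Dual ℝ V) := {α | α ∈ RS.roots ∧ ∀ x ∈ C, 0 < α x}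


/-- The set `Δ_C` of `C`-simple roots. -/
def simples (C : Set V) : Set (Module.Dual ℝ V) := simplesOf (RS.pos C)

/-- The affine reflection `s_{(α,n)} : x ↦ x − (α(x)+n) • α̌`. -/
def sAff (α : Module.Dual ℝ V) (n : ℤ) : Equiv.Perm V :=
  if h : α (RS.coroot α) = 2 then
    Function.Involutive.toPerm (fun x => x - (α x + (n : ℝ)) • RS.coroot α) (by
      intro x
      simp only [map_sub, map_smul, smul_eq_mul, h]
      match_scalars <;> ring)
  else Equiv.refl V


/-- Positivity of an affine function `f` (which is required to be an affine root
`(α,n)`), relative to a positive system `P ⊂ Φ`:  `n > 0`, or `n = 0 ∧ α ∈ P`. -/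
def IsPosAff (P : Set (Module.Dual ℝ V)) (f : V → ℝ) : Prop :=
  ∃ α ∈ RS.roots, ∃ n : ℤ, f = aev α n ∧ (0 < n ∨ (n = 0 ∧ α ∈ P))

/-- The subgroup of the affine Weyl group generated by the reflections `s_{(α,n)}`
with `α ∈ Φ ∩ Φ'`. -/
def affWeylOf (Φ' : Set (Module.Dual ℝ V)) : Subgroup (Equiv.Perm V) :=
  Subgroup.closure {g | ∃ α ∈ RS.roots ∩ Φ', ∃ n : ℤ, g = RS.sAff α n}

/-- The affine Weyl group `W̃ = W ⋉ Λ`, realized as the group generated by all affine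
reflections `s_{(α,n)}`. -/
def affWeyl : Subgroup (Equiv.Perm V) := RS.affWeylOf Set.univ

/-- The finite Weyl group `W`, generated by the linear reflections `s_α = s_{(α,0)}`. -/
def weyl : Subgroup (Equiv.Perm V) :=
  Subgroup.closure {g | ∃ α ∈ RS.roots, g = RS.sAff α 0}

/-- The subgroup `W̃_α` generated by the reflections `s_{(α,n)}`, `n ∈ ℤ`. -/
def reflSubgroup (α : Module.Dual ℝ V) : Subgroup (Equiv.Perm V) :=
  Subgroup.closure {g | ∃ n : ℤ, g = RS.sAff α n}


/-- The coroot lattice `Λ ⊂ V`. -/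
def corootLattice : AddSubgroup V := AddSubgroup.closure (RS.coroot '' RS.roots)


/-- The (open) fundamental alcove `A₀ ⊂ C₀`, whose closure contains `0`. -/
def alcove (C₀ : Set V) : Set V := {x | ∀ α ∈ RS.pos C₀, 0 < α x ∧ α x < 1}

/-- `w ∈ C`, i.e. `w(A₀) ⊂ C`. -/
def MemC (C₀ : Set V) (w : Equiv.Perm V) (C : Set V) : Prop :=
  ∀ x ∈ RS.alcove C₀, w x ∈ C

/-- The inversion set of `w`: positive affine roots `f` with `w⁻¹(f) = f ∘ w`
negative. -/
def invSet (P : Set (Module.Dual ℝ V)) (w : Equiv.Perm V) : Set (V → ℝ) :=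
  {f | RS.IsPosAff P f ∧ ¬ RS.IsPosAff P (fun x => f (w x))}

/-- The length function `l` on `W̃` determined by the fundamental alcove:
the number of inversions. -/
def len (C₀ : Set V) (w : Equiv.Perm V) : ℕ := (RS.invSet (RS.pos C₀) w).ncard

/-- The (strict) Bruhat order on `W̃`: the transitive closure of
`x < s_{(α,n)} x` whenever the length increases. -/
def bruhatLT (C₀ : Set V) : Equiv.Perm V → Equiv.Perm V → Prop :=
  Relation.TransGen (fun x y =>
    (∃ α ∈ RS.roots, ∃ n : ℤ, y = RS.sAff α n * x) ∧ RS.len C₀ x < RS.len C₀ y)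

/-- The Bruhat order `≤` on `W̃`. -/
def bruhatLE (C₀ : Set V) (x y : Equiv.Perm V) : Prop := x = y ∨ RS.bruhatLT C₀ x y

/-- One step of the ordering `<_{Φ'}`:  `x = s_{(α,n)} y <_{(α,n)} y` with `α ∈ Φ'`,
i.e. `y⁻¹((α,n)) > 0` (positivity of affine roots relative to `P`). -/
def stepRel (P Φ' : Set (Module.Dual ℝ V)) (x y : Equiv.Perm V) : Prop :=
  ∃ α ∈ RS.roots ∩ Φ', ∃ n : ℤ,
    x = RS.sAff α n * y ∧ RS.IsPosAff P (fun v => aev α n (y v))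

/-- The ordering `<_{Φ'}` on `W̃` (with affine-root positivity relative to `P`). -/
def ordLT (P Φ' : Set (Module.Dual ℝ V)) : Equiv.Perm V → Equiv.Perm V → Prop :=
  Relation.TransGen (RS.stepRel P Φ')

/-- The ordering `≤_{Φ'}` on `W̃`. -/
def ordLE (P Φ' : Set (Module.Dual ℝ V)) (x y : Equiv.Perm V) : Prop :=
  x = y ∨ RS.ordLT P Φ' x y

/-- The ordering `<_{Φ'}` on `V`: `x <_{Φ'} y` iff `y − x` is a positive linear
combination of coroots `α̌` with `α ∈ Φ'`. -/
def vecLT (Φ' : Set (Module.Dual ℝ V)) (x y : V) : Prop :=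
  ∃ s : Finset (Module.Dual ℝ V), ∃ c : Module.Dual ℝ V → ℝ,
    s.Nonempty ∧ (∀ α ∈ s, α ∈ RS.roots ∩ Φ' ∧ 0 < c α) ∧
      y - x = ∑ α ∈ s, c α • RS.coroot α

/-- The ordering `≤_{Φ'}` on `V`. -/
def vecLE (Φ' : Set (Module.Dual ℝ V)) (x y : V) : Prop := x = y ∨ RS.vecLT Φ' x y

/-- `ψ` is the fundamental weight of the chamber `C` corresponding to the simple root
`α ∈ Δ_C`:  `⟨ψ, β̌⟩ = δ_{αβ}` for `β ∈ Δ_C`. -/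
def PairsIn (C : Set V) (ψ α : Module.Dual ℝ V) : Prop :=
  α ∈ RS.simples C ∧ ∀ β ∈ RS.simples C, ψ (RS.coroot β) = if β = α then 1 else 0

/-- `ψv` is the fundamental coweight of the chamber `C` corresponding to the simple
root `α ∈ Δ_C`:  `⟨β, ψv⟩ = δ_{αβ}` for `β ∈ Δ_C`. -/
def CoPairsIn (C : Set V) (α : Module.Dual ℝ V) (ψv : V) : Prop :=
  α ∈ RS.simples C ∧ ∀ β ∈ RS.simples C, β ψv = if β = α then 1 else 0

/-- `ψ ∈ Ψ_C` with corresponding fundamental coweight `ψ̌ = ψv`. -/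
def IsFundPair (C : Set V) (ψ : Module.Dual ℝ V) (ψv : V) : Prop :=
  ∃ α, RS.PairsIn C ψ α ∧ RS.CoPairsIn C α ψv

/-- `ψ ∈ Ψ_C`. -/
def IsFundWeightOf (C : Set V) (ψ : Module.Dual ℝ V) : Prop := ∃ α, RS.PairsIn C ψ α

/-- `Φ(ψ) = {α ∈ Φ : ⟨α, ψ̌⟩ ≥ 0}` (described via the coweight `ψv = ψ̌`). -/
def phiNonneg (ψv : V) : Set (Module.Dual ℝ V) := {α | α ∈ RS.roots ∧ 0 ≤ α ψv}

/-- `Φ^ψ = {α ∈ Φ : ⟨α, ψ̌⟩ = 0}` (described via the coweight `ψv = ψ̌`). -/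
def phiZero (ψv : V) : Set (Module.Dual ℝ V) := {α | α ∈ RS.roots ∧ α ψv = 0}

/-- The set `W̃_ψ` of `w ∈ W̃` with `w⁻¹(Φ̃^ψ_{>0}) ⊂ Φ̃_{>0}`; here `Φψ = Φ^ψ`,
`P` is the chosen positive system of `Φ^ψ` and `C₀` determines `Φ̃_{>0}`. -/
def WpsiSet (C₀ : Set V) (Φψ P : Set (Module.Dual ℝ V)) : Set (Equiv.Perm V) :=
  {w | ∀ α ∈ RS.roots ∩ Φψ, ∀ n : ℤ, (0 < n ∨ (n = 0 ∧ α ∈ P)) →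
      RS.IsPosAff (RS.pos C₀) (fun v => aev α n (w v))}

/-- Admissibility of a tuple `w̄ ∈ W̃^𝒞`: `w_{s_α(C)} ≤_α w_C` for all `C ∈ 𝒞`,
`α ∈ Δ_C`. -/
def AdmissibleW (C₀ : Set V) (w : RS.ChamberT → Equiv.Perm V) : Prop :=
  ∀ C : RS.ChamberT, ∀ α ∈ RS.simples C.1, ∀ C' : RS.ChamberT,
    C'.1 = ⇑(RS.sAff α 0) '' C.1 → RS.ordLE (RS.pos C₀) {α} (w C') (w C)

/-- Quasi-admissibility of a tuple `w̄ ∈ W̃^𝒞`: `w_{s_α(C)} ∈ W̃_α w_C`. -/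
def QuasiAdmissibleW (w : RS.ChamberT → Equiv.Perm V) : Prop :=
  ∀ C : RS.ChamberT, ∀ α ∈ RS.simples C.1, ∀ C' : RS.ChamberT,
    C'.1 = ⇑(RS.sAff α 0) '' C.1 → ∃ u ∈ RS.reflSubgroup α, w C' = u * w C

/-- Admissibility of a tuple `μ̄ ∈ V^𝒞`: `μ_C − μ_{s_α(C)} ∈ ℝ_{≥0} α̌`. -/
def AdmissibleV (μ : RS.ChamberT → V) : Prop :=
  ∀ C : RS.ChamberT, ∀ α ∈ RS.simples C.1, ∀ C' : RS.ChamberT,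
    C'.1 = ⇑(RS.sAff α 0) '' C.1 → ∃ c : ℝ, 0 ≤ c ∧ μ C - μ C' = c • RS.coroot α

/-- Quasi-admissibility of a tuple `μ̄ ∈ V^𝒞`: `μ_C − μ_{s_α(C)} ∈ ℝ α̌`. -/
def QuasiAdmissibleV (μ : RS.ChamberT → V) : Prop :=
  ∀ C : RS.ChamberT, ∀ α ∈ RS.simples C.1, ∀ C' : RS.ChamberT,
    C'.1 = ⇑(RS.sAff α 0) '' C.1 → ∃ c : ℝ, μ C - μ C' = c • RS.coroot α

/-- `m`-regularity of a tuple `μ̄ ∈ V^𝒞`: `⟨α, μ_C⟩ ≥ m` for every `C ∈ 𝒞` and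
`α ∈ Φ_C`. -/
def RegularVAt (m : ℝ) (μ : RS.ChamberT → V) : Prop :=
  ∀ C : RS.ChamberT, ∀ α ∈ RS.pos C.1, m ≤ α (μ C)

/-- `m`-regularity of a tuple `w̄ ∈ W̃^𝒞`. -/
def RegularWAt (m : ℝ) (w : RS.ChamberT → Equiv.Perm V) : Prop :=
  RS.RegularVAt m (fun C => piL (w C))

/-- Regularity of a tuple `μ̄ ∈ V^𝒞`. -/
def RegularV (μ : RS.ChamberT → V) : Prop := ∃ m : ℝ, 0 < m ∧ RS.RegularVAt m μ

/-- Regularity of a tuple `w̄ ∈ W̃^𝒞`. -/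
def RegularW (w : RS.ChamberT → Equiv.Perm V) : Prop := ∃ m : ℝ, 0 < m ∧ RS.RegularWAt m w

/-- `e` is the quasi-admissible tuple `ē_ψ` corresponding to the standard basis vector
`e_ψ ∈ ℤ^Ψ`:  `(ē_ψ)_C = α̌` if `α ∈ Δ_C` corresponds to `ψ ∈ Ψ_C`, and `= 0` if
`ψ ∉ Ψ_C`. -/
def IsEPsiTuple (ψ : Module.Dual ℝ V) (e : RS.ChamberT → V) : Prop :=
  ∀ C : RS.ChamberT,
    (∀ α, RS.PairsIn C.1 ψ α → e C = RS.coroot α) ∧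
      ((¬∃ α, RS.PairsIn C.1 ψ α) → e C = 0)

end RootSystemData
namespace RootSystemData

variable {V : Type*} [AddCommGroup V] [Module ℝ V] (RS : RootSystemData V)

lemma sAff_apply' {α : Module.Dual ℝ V} (h2 : α (RS.coroot α) = 2) (n : ℤ) (v : V) :
    RS.sAff α n v = v - (α v + (n : ℝ)) • RS.coroot α := by
  rw [RootSystemData.sAff, dif_pos h2]; rfl

lemma sAff_inv (α : Module.Dual ℝ V) (n : ℤ) : (RS.sAff α n)⁻¹ = RS.sAff α n := by
  rw [RootSystemData.sAff]
  split
  · exact Function.Involutive.toPerm_symm _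
  · rfl

lemma transl_apply' (μ v : V) : transl μ v = μ + v := rfl

lemma transl_mul' (μ ν : V) : transl μ * transl ν = transl (μ + ν) := by
  ext v; simp [transl_apply', Equiv.Perm.mul_apply, add_assoc]

lemma transl_inv' (μ : V) : (transl μ)⁻¹ = transl (-μ) := by
  ext v
  have h : transl μ (transl (-μ) v) = v := by simp [transl_apply']
  calc (transl μ)⁻¹ v = (transl μ)⁻¹ (transl μ (transl (-μ) v)) := by rw [h]
    _ = transl (-μ) v := Equiv.symm_apply_apply _ _

lemma sAff_mul_sAff {α : Module.Dual ℝ V} (h2 : α (RS.coroot α) = 2) (n m : ℤ) :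
    RS.sAff α n * RS.sAff α m = transl (((m : ℝ) - n) • RS.coroot α) := by
  ext v
  simp only [Equiv.Perm.mul_apply, sAff_apply' RS h2, transl_apply', map_sub, map_add,
    map_smul, smul_eq_mul, h2]
  match_scalars <;> ring

lemma transl_mul_sAff {α : Module.Dual ℝ V} (h2 : α (RS.coroot α) = 2) (k n : ℤ) :
    transl ((k : ℝ) • RS.coroot α) * RS.sAff α n = RS.sAff α (n - k) := by
  ext v
  simp only [Equiv.Perm.mul_apply, sAff_apply' RS h2, transl_apply']
  push_cast
  match_scalars <;> ring

lemma sAff_mul_transl {α : Module.Dual ℝ V} (h2 : α (RS.coroot α) = 2) (n k : ℤ) :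
    RS.sAff α n * transl ((k : ℝ) • RS.coroot α) = RS.sAff α (n + k) := by
  ext v
  simp only [Equiv.Perm.mul_apply, sAff_apply' RS h2, transl_apply', map_add, map_smul,
    smul_eq_mul, h2]
  push_cast
  match_scalars <;> ring

lemma neg_root {β : Module.Dual ℝ V} (hβ : β ∈ RS.roots) : -β ∈ RS.roots := by
  have := RS.reflect_mem β hβ β hβ
  rwa [RS.root_coroot_two β hβ, two_smul, sub_add_eq_sub_sub, sub_sub_cancel_left] at this

lemma dichotomy {C₀ : Set V} (hC₀ : RS.IsChamber C₀) {β : Module.Dual ℝ V}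
    (hβ : β ∈ RS.roots) : β ∈ RS.pos C₀ ∨ -β ∈ RS.pos C₀ := by
  obtain ⟨v, hv, hC⟩ := hC₀
  rcases lt_trichotomy (β v) 0 with h | h | h
  · right
    refine ⟨RS.neg_root hβ, fun x hx => ?_⟩
    rw [hC] at hx
    exact hx (-β) (RS.neg_root hβ) (by simpa using h)
  · exact absurd h (hv β hβ)
  · left
    refine ⟨hβ, fun x hx => ?_⟩
    rw [hC] at hx
    exact hx β hβ h

/-- Lemma A: composing a root with an element of the affine Weyl group gives a root
plus an integer constant. -/
lemma lemA {g : Equiv.Perm V} (hg : g ∈ RS.affWeyl) :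
    ∀ α ∈ RS.roots, ∃ β ∈ RS.roots, ∃ k : ℤ, ∀ v, α (g v) = β v + (k : ℝ) := by
  set P : Equiv.Perm V → Prop := fun g =>
    ∀ α ∈ RS.roots, ∃ β ∈ RS.roots, ∃ k : ℤ, ∀ v, α (g v) = β v + (k : ℝ) with hP
  suffices h : P g ∧ P g⁻¹ from h.1
  refine Subgroup.closure_induction (k := _) (p := fun x _ => P x ∧ P x⁻¹)
    ?_ ?_ ?_ ?_ hg
  · rintro x ⟨γ, ⟨hγ, -⟩, n, rfl⟩
    have h2 := RS.root_coroot_two γ hγ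
    have key : P (RS.sAff γ n) := by
      intro α hα
      obtain ⟨c, hc⟩ := RS.crystallographic γ hγ α hα
      refine ⟨α - α (RS.coroot γ) • γ, RS.reflect_mem γ hγ α hα, -n * c, fun v => ?_⟩
      rw [sAff_apply' RS h2]
      simp only [map_sub, map_add, map_smul, smul_eq_mul, LinearMap.sub_apply,
        LinearMap.smul_apply]
      rw [hc]; push_cast; ring
    exact ⟨key, by rwa [sAff_inv]⟩
  · exact ⟨fun α hα => ⟨α, hα, 0, fun v => by simp⟩,
      fun α hα => ⟨α, hα, 0, fun v => by simp⟩⟩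
  · rintro x y - - ⟨hx, hx'⟩ ⟨hy, hy'⟩
    constructor
    · intro α hα
      obtain ⟨β, hβ, k, hk⟩ := hx α hα
      obtain ⟨δ, hδ, l, hl⟩ := hy β hβ
      exact ⟨δ, hδ, l + k, fun v => by
        rw [Equiv.Perm.mul_apply, hk, hl]; push_cast; ring⟩
    · intro α hα
      obtain ⟨β, hβ, k, hk⟩ := hy' α hα
      obtain ⟨δ, hδ, l, hl⟩ := hx' β hβ
      exact ⟨δ, hδ, l + k, fun v => by
        rw [mul_inv_rev, Equiv.Perm.mul_apply, hk, hl]; push_cast; ring⟩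
  · rintro x - ⟨hx, hx'⟩
    exact ⟨hx', by rwa [inv_inv]⟩

/-- Classification of elements of `W̃_α`. -/
lemma classifyU {α : Module.Dual ℝ V} (h2 : α (RS.coroot α) = 2) {u : Equiv.Perm V}
    (hu : u ∈ RS.reflSubgroup α) :
    (∃ k : ℤ, u = transl ((k : ℝ) • RS.coroot α)) ∨ (∃ n : ℤ, u = RS.sAff α n) := by
  refine Subgroup.closure_induction (k := _)
    (p := fun x _ => (∃ k : ℤ, x = transl ((k : ℝ) • RS.coroot α)) ∨ (∃ n : ℤ, x = RS.sAff α n))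
    ?_ ?_ ?_ ?_ hu
  · rintro x ⟨n, rfl⟩; exact Or.inr ⟨n, rfl⟩
  · refine Or.inl ⟨0, ?_⟩
    ext v; simp [transl_apply']
  · rintro x y - - (⟨k, rfl⟩ | ⟨n, rfl⟩) (⟨l, rfl⟩ | ⟨m, rfl⟩)
    · refine Or.inl ⟨k + l, ?_⟩
      rw [transl_mul',
        show (k : ℝ) • RS.coroot α + (l : ℝ) • RS.coroot α = ((k + l : ℤ) : ℝ) • RS.coroot α by
          push_cast; match_scalars; ring]
    · exact Or.inr ⟨m - k, RS.transl_mul_sAff h2 k m⟩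
    · exact Or.inr ⟨n + l, RS.sAff_mul_transl h2 n l⟩
    · refine Or.inl ⟨m - n, ?_⟩
      rw [RS.sAff_mul_sAff h2,
        show ((m : ℝ) - (n : ℝ)) • RS.coroot α = ((m - n : ℤ) : ℝ) • RS.coroot α by
          push_cast; match_scalars; ring]
  · rintro x - (⟨k, rfl⟩ | ⟨n, rfl⟩)
    · refine Or.inl ⟨-k, ?_⟩
      rw [transl_inv',
        show -((k : ℝ) • RS.coroot α) = ((-k : ℤ) : ℝ) • RS.coroot α by
          push_cast; match_scalars; ring]
    · exact Or.inr ⟨n, RS.sAff_inv α n⟩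

/-- A single step of the order. -/
lemma stepB {C₀ : Set V} {α β : Module.Dual ℝ V} (hα : α ∈ RS.roots) (hβ : β ∈ RS.roots)
    {a : ℤ} {h : Equiv.Perm V} (hh : ∀ v, α (h v) = β v + (a : ℝ)) (n : ℤ)
    (hpos : 0 < a + n ∨ (a + n = 0 ∧ β ∈ RS.pos C₀)) :
    RS.stepRel (RS.pos C₀) {α} (RS.sAff α n * h) h := by
  refine ⟨α, ⟨hα, rfl⟩, n, rfl, β, hβ, a + n, ?_, hpos⟩
  funext v
  simp only [aev]
  rw [hh]; push_cast; ring

lemma comp_sAff {α β : Module.Dual ℝ V} (h2 : α (RS.coroot α) = 2)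
    {a : ℤ} {h : Equiv.Perm V} (hh : ∀ v, α (h v) = β v + (a : ℝ)) (n : ℤ) :
    ∀ v, α ((RS.sAff α n * h) v) = (-β) v + (((-a - 2 * n : ℤ)) : ℝ) := by
  intro v
  simp only [Equiv.Perm.mul_apply, sAff_apply' RS h2, map_sub, map_smul, smul_eq_mul,
    h2, hh, LinearMap.neg_apply]
  push_cast
  ring

/-- Claim B: `transl(-α̌) h <_α h`. -/
lemma claimB {C₀ : Set V} (hC₀ : RS.IsChamber C₀) {α β : Module.Dual ℝ V}
    (hα : α ∈ RS.roots) (hβ : β ∈ RS.roots) {a : ℤ} {h : Equiv.Perm V}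
    (hh : ∀ v, α (h v) = β v + (a : ℝ)) :
    RS.ordLT (RS.pos C₀) {α} (transl (-RS.coroot α) * h) h := by
  have h2 := RS.root_coroot_two α hα
  rcases RS.dichotomy hC₀ hβ with hpos | hneg
  · have e1 : RS.sAff α (-a + 1) * (RS.sAff α (-a) * h) = transl (-RS.coroot α) * h := by
      rw [← mul_assoc, RS.sAff_mul_sAff h2,
        show (((-a : ℤ) : ℝ) - ((-a + 1 : ℤ) : ℝ)) • RS.coroot α = -RS.coroot α by
          push_cast; match_scalars; ring]
    refine Relation.TransGen.head (b := RS.sAff α (-a) * h) ?_ (Relation.TransGen.single ?_)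
    · rw [← e1]
      exact RS.stepB hα (RS.neg_root hβ) (RS.comp_sAff h2 hh (-a)) (-a + 1) (Or.inl (by omega))
    · exact RS.stepB hα hβ hh (-a) (Or.inr ⟨by omega, hpos⟩)
  · have e1 : RS.sAff α (1 - a + 1) * (RS.sAff α (1 - a) * h) = transl (-RS.coroot α) * h := by
      rw [← mul_assoc, RS.sAff_mul_sAff h2,
        show (((1 - a : ℤ) : ℝ) - ((1 - a + 1 : ℤ) : ℝ)) • RS.coroot α = -RS.coroot α by
          push_cast; match_scalars; ring]
    refine Relation.TransGen.head (b := RS.sAff α (1 - a) * h) ?_ (Relation.TransGen.single ?_)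
    · rw [← e1]
      exact RS.stepB hα (RS.neg_root hβ) (RS.comp_sAff h2 hh (1 - a)) (1 - a + 1)
        (Or.inr ⟨by omega, hneg⟩)
    · exact RS.stepB hα hβ hh (1 - a) (Or.inl (by omega))

lemma comp_transl {α β : Module.Dual ℝ V} (h2 : α (RS.coroot α) = 2)
    {a : ℤ} {h : Equiv.Perm V} (hh : ∀ v, α (h v) = β v + (a : ℝ)) (j : ℕ) :
    ∀ v, α ((transl ((-(j : ℝ)) • RS.coroot α) * h) v) = β v + (((a - 2 * j : ℤ)) : ℝ) := by
  intro v
  rw [Equiv.Perm.mul_apply, transl_apply', map_add, map_smul, smul_eq_mul, h2, hh]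
  push_cast; ring

/-- Iterated Claim B. -/
lemma claimB_iter {C₀ : Set V} (hC₀ : RS.IsChamber C₀) {α : Module.Dual ℝ V}
    (hα : α ∈ RS.roots) (j : ℕ) :
    ∀ (β : Module.Dual ℝ V), β ∈ RS.roots → ∀ (a : ℤ) (h : Equiv.Perm V),
      (∀ v, α (h v) = β v + (a : ℝ)) →
      RS.ordLE (RS.pos C₀) {α} (transl ((-(j : ℝ)) • RS.coroot α) * h) h := by
  have h2 := RS.root_coroot_two α hα
  induction j with
  | zero =>
    intro β hβ a h hh
    left
    have : transl ((-((0 : ℕ) : ℝ)) • RS.coroot α) = 1 := by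
      ext v; simp [transl_apply']
    rw [this, one_mul]
  | succ j ih =>
    intro β hβ a h hh
    have step := RS.claimB hC₀ hα hβ (RS.comp_transl h2 hh j)
    have e : transl (-RS.coroot α) * (transl ((-(j : ℝ)) • RS.coroot α) * h)
        = transl ((-((j + 1 : ℕ) : ℝ)) • RS.coroot α) * h := by
      rw [← mul_assoc, transl_mul',
        show -RS.coroot α + (-(j : ℝ)) • RS.coroot α
            = (-((j + 1 : ℕ) : ℝ)) • RS.coroot α by
          push_cast; match_scalars; ring]
    rw [e] at step
    rcases ih β hβ a h hh with heq | hlt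
    · right; rwa [heq] at step
    · right; exact step.trans hlt

/-- `-α` is `s_α(C)`-positive when `α` is `C`-simple. -/
lemma neg_mem_pos_flip {C C' : Set V} {α : Module.Dual ℝ V}
    (hαs : α ∈ RS.simples C) (hC' : C' = ⇑(RS.sAff α 0) '' C) : -α ∈ RS.pos C' := by
  obtain ⟨⟨hα, hp⟩, -⟩ := hαs
  have h2 := RS.root_coroot_two α hα
  refine ⟨RS.neg_root hα, ?_⟩
  rintro x hx
  rw [hC'] at hx
  obtain ⟨y, hy, rfl⟩ := hx
  rw [LinearMap.neg_apply, sAff_apply' RS h2, map_sub, map_smul, smul_eq_mul, h2]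
  have := hp y hy
  push_cast
  linarith

end RootSystemData

/-- Lemma 1.19(a): a quasi-admissible regular tuple `w̄ ∈ W̃^𝒞`
(resp. `μ̄ ∈ V^𝒞`) is admissible. -/
theorem stmt10 {V : Type*} [AddCommGroup V] [Module ℝ V] [FiniteDimensional ℝ V]
    (RS : RootSystemData V) (C₀ : Set V) (hC₀ : RS.IsChamber C₀) :
    (∀ w : RS.ChamberT → Equiv.Perm V, (∀ C, w C ∈ RS.affWeyl) →
      RS.QuasiAdmissibleW w → RS.RegularW w → RS.AdmissibleW C₀ w) ∧
    (∀ μ : RS.ChamberT → V,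
      RS.QuasiAdmissibleV μ → RS.RegularV μ → RS.AdmissibleV μ) := by
  constructor
  · rintro w hw hq ⟨m, hm, hreg⟩ C α hαs C' hC'
    obtain ⟨u, hu, hwC'⟩ := hq C α hαs C' hC'
    obtain ⟨hαp, hα2⟩ := hαs
    have hα : α ∈ RS.roots := hαp.1
    have h2 := RS.root_coroot_two α hα
    obtain ⟨β, hβ, a, hh⟩ := RS.lemA (hw C) α hα
    have ha0 : α (w C 0) = (a : ℝ) := by simpa using hh 0
    have hma : m ≤ (a : ℝ) := by
      have := hreg C α hαp
      simpa [piL, ha0] using this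
    have hneg : m ≤ -(α (w C' 0)) := by
      have := hreg C' (-α) (RS.neg_mem_pos_flip ⟨hαp, hα2⟩ hC')
      simpa [piL] using this
    have ha1 : 1 ≤ a := by
      have h0 : (0 : ℝ) < (a : ℝ) := lt_of_lt_of_le hm hma
      have : 0 < a := by exact_mod_cast h0
      omega
    rcases RS.classifyU h2 hu with ⟨k, huk⟩ | ⟨n, hun⟩
    · -- translation case
      have hwc : w C' = transl ((k : ℝ) • RS.coroot α) * w C := by rw [hwC', huk]
      have hval : α (w C' 0) = (a : ℝ) + 2 * k := by
        rw [hwc, Equiv.Perm.mul_apply, RootSystemData.transl_apply', map_add, map_smul,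
          smul_eq_mul, h2, ha0]
        ring
      have hk : k < 0 := by
        have hx : m ≤ -((a : ℝ) + 2 * k) := by rw [← hval]; exact hneg
        have : (k : ℝ) < 0 := by linarith
        exact_mod_cast this
      set j : ℕ := (-k).toNat with hjdef
      have hj : -((j : ℕ) : ℝ) = (k : ℝ) := by
        have h' : ((-k).toNat : ℤ) = -k := Int.toNat_of_nonneg (by omega)
        have h'' : (((-k).toNat : ℤ) : ℝ) = ((-k : ℤ) : ℝ) := by rw [h']
        push_cast at h''
        rw [hjdef]
        push_cast
        linarith
      rw [hwc, ← hj]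
      exact RS.claimB_iter hC₀ hα j β hβ a (w C) hh
    · -- reflection case
      have hwc : w C' = RS.sAff α n * w C := by rw [hwC', hun]
      have hval : α (w C' 0) = ((-a - 2 * n : ℤ) : ℝ) := by
        have := RS.comp_sAff h2 hh n 0
        rw [← hwc] at this
        simpa using this
      have h2n : 1 ≤ a + 2 * n := by
        have hx : m ≤ -(((-a - 2 * n : ℤ)) : ℝ) := by rw [← hval]; exact hneg
        have h0 : (0 : ℝ) < ((a + 2 * n : ℤ) : ℝ) := by push_cast at hx ⊢; linarith
        have : 0 < a + 2 * n := by exact_mod_cast h0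
        omega
      set k' : ℤ := a + n - 1 with hk'def
      have hk0 : 0 ≤ k' := by omega
      have hstep : RS.ordLT (RS.pos C₀) {α} (RS.sAff α (1 - a) * w C) (w C) :=
        Relation.TransGen.single (RS.stepB hα hβ hh (1 - a) (Or.inl (by omega)))
      have hh0 := RS.comp_sAff h2 hh (1 - a)
      have hle := RS.claimB_iter hC₀ hα k'.toNat (-β) (RS.neg_root hβ)
        (-a - 2 * (1 - a)) (RS.sAff α (1 - a) * w C) hh0
      have hcast : -((k'.toNat : ℕ) : ℝ) = ((-k' : ℤ) : ℝ) := by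
        have h' : ((k'.toNat : ℕ) : ℤ) = k' := Int.toNat_of_nonneg hk0
        have h'' : (((k'.toNat : ℕ) : ℤ) : ℝ) = ((k' : ℤ) : ℝ) := by rw [h']
        push_cast at h'' ⊢
        linarith
      have hid : transl ((-((k'.toNat : ℕ) : ℝ)) • RS.coroot α)
          * (RS.sAff α (1 - a) * w C) = w C' := by
        rw [hcast, ← mul_assoc, RS.transl_mul_sAff h2, hwc,
          show (1 - a - -k' : ℤ) = n by omega]
      rcases hle with heq | hlt
      · right
        rw [hid] at heq
        rw [heq]
        exact hstep
      · right
        rw [hid] at hlt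
        exact hlt.trans hstep
  · rintro μ hq ⟨m, hm, hreg⟩ C α hαs C' hC'
    obtain ⟨c, hc⟩ := hq C α hαs C' hC'
    obtain ⟨hαp, hns⟩ := hαs
    have hα : α ∈ RS.roots := hαp.1
    have h2 := RS.root_coroot_two α hα
    refine ⟨c, ?_, hc⟩
    have h1 : m ≤ α (μ C) := hreg C α hαp
    have h3 : m ≤ -(α (μ C')) := by
      simpa using hreg C' (-α) (RS.neg_mem_pos_flip ⟨hαp, hns⟩ hC')
    have h4 : α (μ C) - α (μ C') = c * 2 := by
      rw [← map_sub, hc, map_smul, smul_eq_mul, h2]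
    linarith
end
end

section
/- Let μ̄ ∈ V^𝒞 be a regular quasi-admissible tuple and let ψ ∈ Ψ. Then for every x ∈ V^{≤μ̄} and every α ∈ Φ such that ⟨α, ψ̌⟩ > 0 and ⟨ψ, x⟩ = μ_ψ, one has ⟨α, x⟩ > 0. -/
open scoped Classical

noncomputable section

namespace RootSystemData

variable {V : Type*} [AddCommGroup V] [Module ℝ V] (RS : RootSystemData V)

/-- The reflection in root `α`, acting on the dual space, as a linear map. -/
def reflD (α : Module.Dual ℝ V) : Module.Dual ℝ V →ₗ[ℝ] Module.Dual ℝ V where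
  toFun β := β - β (RS.coroot α) • α
  map_add' x y := by simp [add_smul]; abel
  map_smul' c x := by simp only [LinearMap.smul_apply, RingHom.id_apply, smul_eq_mul, smul_sub, smul_smul]

lemma reflD_apply (α β : Module.Dual ℝ V) : RS.reflD α β = β - β (RS.coroot α) • α := rfl

lemma reflD_involutive {α : Module.Dual ℝ V} (h2 : α (RS.coroot α) = 2) :
    Function.Involutive (RS.reflD α) := by
  intro β
  simp only [reflD_apply, map_sub, map_smul, h2, smul_eq_mul, sub_smul, mul_smul]
  module

/-- The reflection in root `α` as a linear automorphism. -/
def reflE (α : Module.Dual ℝ V) : Module.Dual ℝ V ≃ₗ[ℝ] Module.Dual ℝ V :=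
  if h : α (RS.coroot α) = 2 then
    LinearEquiv.ofInvolutive (RS.reflD α) (RS.reflD_involutive h)
  else LinearEquiv.refl ℝ _

lemma reflE_apply {α : Module.Dual ℝ V} (hα : α ∈ RS.roots) (β : Module.Dual ℝ V) :
    RS.reflE α β = β - β (RS.coroot α) • α := by
  rw [reflE, dif_pos (RS.root_coroot_two α hα)]; rfl

lemma reflE_mem {α : Module.Dual ℝ V} (hα : α ∈ RS.roots) {β : Module.Dual ℝ V}
    (hβ : β ∈ RS.roots) : RS.reflE α β ∈ RS.roots := by
  rw [RS.reflE_apply hα]; exact RS.reflect_mem α hα β hβ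

lemma reflE_invol {α : Module.Dual ℝ V} (hα : α ∈ RS.roots) (β : Module.Dual ℝ V) :
    RS.reflE α (RS.reflE α β) = β := by
  have h2 := RS.root_coroot_two α hα
  rw [reflE, dif_pos h2]
  exact RS.reflD_involutive h2 β

lemma reflE_self {α : Module.Dual ℝ V} (hα : α ∈ RS.roots) : RS.reflE α α = -α := by
  rw [RS.reflE_apply hα, RS.root_coroot_two α hα]
  module

lemma neg_mem {α : Module.Dual ℝ V} (hα : α ∈ RS.roots) : -α ∈ RS.roots := by
  have := RS.reflE_mem hα hα
  rwa [RS.reflE_self hα] at this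

/-- The group generated by the dual reflections. -/
def weylDual : Subgroup (Module.Dual ℝ V ≃ₗ[ℝ] Module.Dual ℝ V) :=
  Subgroup.closure {g | ∃ α ∈ RS.roots, g = RS.reflE α}

lemma weylDual_bijOn {g} (hg : g ∈ RS.weylDual) : Set.BijOn g RS.roots RS.roots := by
  induction hg using Subgroup.closure_induction with
  | mem x hx =>
    obtain ⟨α, hα, rfl⟩ := hx
    have hmt : Set.MapsTo (RS.reflE α) RS.roots RS.roots := fun β hβ => RS.reflE_mem hα hβ
    refine ⟨hmt, fun a _ b _ hab => (RS.reflE α).injective hab, fun β hβ => ?_⟩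
    exact ⟨RS.reflE α β, RS.reflE_mem hα hβ, RS.reflE_invol hα β⟩
  | one => simpa using Set.bijOn_id RS.roots
  | mul x y _ _ hx hy =>
    have : ⇑(x * y) = ⇑x ∘ ⇑y := rfl
    rw [this]; exact hx.comp hy
  | inv x _ hx =>
    refine ⟨fun β hβ => ?_, fun a _ b _ hab => x.symm.injective hab, fun β hβ => ?_⟩
    · obtain ⟨γ, hγ, hγβ⟩ := hx.surjOn hβ
      have hxi : x⁻¹ β = γ := by
        rw [← hγβ]; exact x.symm_apply_apply γ
      rwa [hxi]
    · refine ⟨x β, hx.mapsTo hβ, ?_⟩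
      exact x.symm_apply_apply β

lemma weylDual_finite : ((RS.weylDual : Set (Module.Dual ℝ V ≃ₗ[ℝ] Module.Dual ℝ V))).Finite := by
  have hR : RS.roots.Finite := RS.finite
  haveI : Finite RS.roots := hR
  have hinj : Function.Injective
      (fun g : RS.weylDual => (fun r : RS.roots => (⟨g.1 r, (RS.weylDual_bijOn g.2).mapsTo r.2⟩ : RS.roots))) := by
    intro g h hgh
    have : ∀ β ∈ RS.roots, g.1 β = h.1 β := by
      intro β hβ
      have := congrFun hgh ⟨β, hβ⟩
      exact congrArg Subtype.val this
    have : g.1.toLinearMap = h.1.toLinearMap :=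
      LinearMap.ext_on RS.span_top (fun β hβ => this β hβ)
    exact Subtype.ext (LinearEquiv.toLinearMap_injective this)
  haveI : Finite RS.weylDual := Finite.of_injective _ hinj
  exact (Set.toFinite _)

end RootSystemData

section DualB0
variable (V : Type*) [AddCommGroup V] [Module ℝ V] [FiniteDimensional ℝ V]

/-- An auxiliary positive-definite bilinear form on the dual space. -/
def dualB0 : Module.Dual ℝ V →ₗ[ℝ] Module.Dual ℝ V →ₗ[ℝ] ℝ :=
  ∑ i, ((Module.finBasis ℝ (Module.Dual ℝ V)).coord i).smulRight
        ((Module.finBasis ℝ (Module.Dual ℝ V)).coord i)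

variable {V}

lemma dualB0_apply (x y : Module.Dual ℝ V) :
    dualB0 V x y = ∑ i, (Module.finBasis ℝ (Module.Dual ℝ V)).coord i x *
      (Module.finBasis ℝ (Module.Dual ℝ V)).coord i y := by
  simp [dualB0, LinearMap.sum_apply, LinearMap.smulRight_apply, smul_eq_mul, mul_comm]

lemma dualB0_symm (x y : Module.Dual ℝ V) : dualB0 V x y = dualB0 V y x := by
  simp only [dualB0_apply]; exact Finset.sum_congr rfl fun i _ => mul_comm _ _

lemma dualB0_nonneg (x : Module.Dual ℝ V) : 0 ≤ dualB0 V x x := by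
  rw [dualB0_apply]; exact Finset.sum_nonneg fun i _ => mul_self_nonneg _

lemma dualB0_posdef {x : Module.Dual ℝ V} (hx : x ≠ 0) : 0 < dualB0 V x x := by
  rcases lt_or_eq_of_le (dualB0_nonneg x) with h | h
  · exact h
  · exfalso
    apply hx
    rw [← (Module.finBasis ℝ (Module.Dual ℝ V)).forall_coord_eq_zero_iff]
    intro i
    have h0 := h.symm
    rw [dualB0_apply] at h0
    have := (Finset.sum_eq_zero_iff_of_nonneg (fun i _ => mul_self_nonneg _)).1 h0 i
      (Finset.mem_univ i)
    nlinarith [this]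

end DualB0

namespace RootSystemData

variable {V : Type*} [AddCommGroup V] [Module ℝ V] [FiniteDimensional ℝ V]
variable (RS : RootSystemData V)

/-- The Weyl-group finset. -/
def GF : Finset (Module.Dual ℝ V ≃ₗ[ℝ] Module.Dual ℝ V) := RS.weylDual_finite.toFinset

lemma mem_GF {g} : g ∈ RS.GF ↔ g ∈ RS.weylDual := by simp [GF]

/-- The invariant positive-definite form on the dual space. -/
def BB : Module.Dual ℝ V →ₗ[ℝ] Module.Dual ℝ V →ₗ[ℝ] ℝ :=
  ∑ g ∈ RS.GF, (dualB0 V).compl₁₂ g.toLinearMap g.toLinearMap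

lemma BB_apply (x y : Module.Dual ℝ V) : RS.BB x y = ∑ g ∈ RS.GF, dualB0 V (g x) (g y) := by
  simp [BB, LinearMap.sum_apply, LinearMap.compl₁₂_apply]

lemma BB_symm (x y : Module.Dual ℝ V) : RS.BB x y = RS.BB y x := by
  simp only [BB_apply]; exact Finset.sum_congr rfl fun g _ => dualB0_symm _ _

lemma BB_posdef {x : Module.Dual ℝ V} (hx : x ≠ 0) : 0 < RS.BB x x := by
  rw [BB_apply]
  refine Finset.sum_pos' (fun g _ => dualB0_nonneg _) ⟨1, ?_, ?_⟩
  · rw [mem_GF]; exact one_mem _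
  · have h1 : (1 : Module.Dual ℝ V ≃ₗ[ℝ] Module.Dual ℝ V) x = x := rfl
    rw [h1]; exact dualB0_posdef hx

lemma BB_pos_ne_zero {x : Module.Dual ℝ V} (hx : x ≠ 0) : RS.BB x x ≠ 0 :=
  ne_of_gt (RS.BB_posdef hx)

lemma BB_invariant {h} (hh : h ∈ RS.weylDual) (x y : Module.Dual ℝ V) :
    RS.BB (h x) (h y) = RS.BB x y := by
  rw [BB_apply, BB_apply]
  refine Finset.sum_nbij' (fun g => g * h) (fun g => g * h⁻¹) ?_ ?_ ?_ ?_ ?_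
  · intro g hg; rw [mem_GF] at *; exact mul_mem hg hh
  · intro g hg; rw [mem_GF] at *; exact mul_mem hg (inv_mem hh)
  · intro g _; group
  · intro g _; group
  · intro g _; rfl

omit [FiniteDimensional ℝ V] in
lemma reflE_mem_weylDual {α : Module.Dual ℝ V} (hα : α ∈ RS.roots) :
    RS.reflE α ∈ RS.weylDual :=
  Subgroup.subset_closure ⟨α, hα, rfl⟩

/-- The key identity: `β(α̌) B(α,α) = 2 B(β,α)`. -/
lemma coroot_key {α : Module.Dual ℝ V} (hα : α ∈ RS.roots) (β : Module.Dual ℝ V) :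
    β (RS.coroot α) * RS.BB α α = 2 * RS.BB β α := by
  have hinv := RS.BB_invariant (RS.reflE_mem_weylDual hα) β α
  rw [RS.reflE_self hα, RS.reflE_apply hα β] at hinv
  simp only [map_sub, map_smul, map_neg, LinearMap.sub_apply, LinearMap.smul_apply,
    LinearMap.neg_apply, smul_eq_mul] at hinv
  linarith

end RootSystemData

section MultisetAux
variable {V : Type*} [AddCommGroup V] [Module ℝ V]

lemma multiset_sum_eval (l : Multiset (Module.Dual ℝ V)) (w : V) :
    l.sum w = (l.map (fun β : Module.Dual ℝ V => β w)).sum := by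
  induction l using Multiset.induction_on with
  | empty => simp
  | cons a s ih => simp [Multiset.sum_cons, ih]

lemma multiset_sum_pos (l : Multiset ℝ) (hl : l ≠ 0) (h : ∀ x ∈ l, 0 < x) : 0 < l.sum := by
  obtain ⟨a, ha⟩ := Multiset.exists_mem_of_ne_zero hl
  have : a ::ₘ l.erase a = l := Multiset.cons_erase ha
  rw [← this, Multiset.sum_cons]
  have h2 : 0 ≤ (l.erase a).sum :=
    Multiset.sum_nonneg fun x hx => le_of_lt (h x (Multiset.mem_of_mem_erase hx))
  have := h a ha
  linarith

end MultisetAux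

namespace RootSystemData

variable {V : Type*} [AddCommGroup V] [Module ℝ V]
variable (RS : RootSystemData V)

def posOf (v : V) : Set (Module.Dual ℝ V) := {γ | γ ∈ RS.roots ∧ 0 < γ v}

def chamberSet (v : V) : Set V := {x | ∀ γ ∈ RS.roots, 0 < γ v → 0 < γ x}

lemma isChamber_chamberSet {v} (hv : RS.IsRegularPt v) : RS.IsChamber (RS.chamberSet v) :=
  ⟨v, hv, rfl⟩

lemma mem_chamberSet_self (v : V) : v ∈ RS.chamberSet v := fun _ _ h => h

lemma pos_chamberSet (v : V) : RS.pos (RS.chamberSet v) = RS.posOf v := by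
  ext γ
  constructor
  · rintro ⟨hγ, h⟩; exact ⟨hγ, h v (RS.mem_chamberSet_self v)⟩
  · rintro ⟨hγ, h⟩; exact ⟨hγ, fun x hx => hx γ hγ h⟩

lemma chamber_witness (C : RS.ChamberT) : ∃ v, RS.IsRegularPt v ∧ C.1 = RS.chamberSet v := by
  obtain ⟨v, hv, hC⟩ := C.2
  exact ⟨v, hv, hC⟩

lemma posOf_mem_roots {v γ} (h : γ ∈ RS.posOf v) : γ ∈ RS.roots := h.1

lemma notMem_posOf_neg {v γ} (h : γ ∈ RS.posOf v) : -γ ∉ RS.posOf v := by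
  rintro ⟨-, hneg⟩
  have := h.2
  rw [LinearMap.neg_apply] at hneg
  linarith

lemma neg_mem_posOf {v} (hv : RS.IsRegularPt v) {γ} (hγ : γ ∈ RS.roots)
    (h : γ ∉ RS.posOf v) : -γ ∈ RS.posOf v := by
  refine ⟨RS.neg_mem hγ, ?_⟩
  rw [LinearMap.neg_apply]
  rcases lt_trichotomy (γ v) 0 with h1 | h1 | h1
  · linarith
  · exact absurd h1 (hv γ hγ)
  · exact absurd ⟨hγ, h1⟩ h

/-- Every positive root is a nonempty sum of simple roots. -/
lemma exists_decomp {v} (hv : RS.IsRegularPt v) :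
    ∀ α ∈ RS.posOf v, ∃ l : Multiset (Module.Dual ℝ V),
      l ≠ 0 ∧ (∀ β ∈ l, β ∈ simplesOf (RS.posOf v)) ∧ l.sum = α := by
  have hfin : (RS.posOf v).Finite := RS.finite.subset fun γ h => h.1
  suffices key : ∀ n : ℕ, ∀ α ∈ RS.posOf v,
      (hfin.toFinset.filter (fun γ => γ v < α v)).card = n →
      ∃ l : Multiset (Module.Dual ℝ V),
        l ≠ 0 ∧ (∀ β ∈ l, β ∈ simplesOf (RS.posOf v)) ∧ l.sum = α by
    intro α hα
    exact key _ α hα rfl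
  intro n
  induction n using Nat.strong_induction_on with
  | _ n ih =>
    intro α hα hcard
    by_cases hs : α ∈ simplesOf (RS.posOf v)
    · refine ⟨{α}, by simp, ?_, by simp⟩
      intro β hβ
      rw [Multiset.mem_singleton] at hβ
      rwa [hβ]
    · have hex : ∃ β ∈ RS.posOf v, ∃ γ ∈ RS.posOf v, α = β + γ := by
        by_contra hne
        exact hs ⟨hα, hne⟩
      obtain ⟨β, hβ, γ, hγ, hαβγ⟩ := hex
      have hval : α v = β v + γ v := by rw [hαβγ]; rfl
      have hβα : β v < α v := by have := hγ.2; linarith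
      have hγα : γ v < α v := by have := hβ.2; linarith
      have hsub : ∀ δ : Module.Dual ℝ V, δ v < β v → δ v < α v := fun δ h => lt_trans h hβα
      have hcardβ : (hfin.toFinset.filter (fun γ' => γ' v < β v)).card < n := by
        rw [← hcard]
        apply Finset.card_lt_card
        constructor
        · intro δ hδ
          rw [Finset.mem_filter] at *
          exact ⟨hδ.1, lt_trans hδ.2 hβα⟩
        · intro hsub2
          have hβmem : β ∈ hfin.toFinset.filter (fun γ' => γ' v < α v) := by
            rw [Finset.mem_filter, Set.Finite.mem_toFinset]
            exact ⟨hβ, hβα⟩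
          have := hsub2 hβmem
          rw [Finset.mem_filter] at this
          exact lt_irrefl _ this.2
      have hcardγ : (hfin.toFinset.filter (fun γ' => γ' v < γ v)).card < n := by
        rw [← hcard]
        apply Finset.card_lt_card
        constructor
        · intro δ hδ
          rw [Finset.mem_filter] at *
          exact ⟨hδ.1, lt_trans hδ.2 hγα⟩
        · intro hsub2
          have hγmem : γ ∈ hfin.toFinset.filter (fun γ' => γ' v < α v) := by
            rw [Finset.mem_filter, Set.Finite.mem_toFinset]
            exact ⟨hγ, hγα⟩
          have := hsub2 hγmem
          rw [Finset.mem_filter] at this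
          exact lt_irrefl _ this.2
      obtain ⟨l₁, hl₁ne, hl₁mem, hl₁sum⟩ := ih _ hcardβ β hβ rfl
      obtain ⟨l₂, hl₂ne, hl₂mem, hl₂sum⟩ := ih _ hcardγ γ hγ rfl
      refine ⟨l₁ + l₂, ?_, ?_, ?_⟩
      · obtain ⟨a, ha⟩ := Multiset.exists_mem_of_ne_zero hl₁ne
        intro h0
        rw [Multiset.eq_zero_iff_forall_notMem] at h0
        exact h0 a (Multiset.mem_add.2 (Or.inl ha))
      · intro β' hβ'
        rw [Multiset.mem_add] at hβ'
        rcases hβ' with h | h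
        · exact hl₁mem β' h
        · exact hl₂mem β' h
      · rw [Multiset.sum_add, hl₁sum, hl₂sum, hαβγ]

lemma simples_subset_posOf (v : V) : simplesOf (RS.posOf v) ⊆ RS.posOf v := fun _ h => h.1

/-- A root which is a sum of `w`-positive roots is `w`-positive. -/
lemma root_sum_mem {w : V} {γ} (hγ : γ ∈ RS.roots) (l : Multiset (Module.Dual ℝ V))
    (hl : l ≠ 0) (hmem : ∀ β ∈ l, β ∈ RS.posOf w) (hsum : l.sum = γ) : γ ∈ RS.posOf w := by
  refine ⟨hγ, ?_⟩
  rw [← hsum, multiset_sum_eval]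
  apply multiset_sum_pos
  · simpa [Multiset.map_eq_zero] using hl
  · intro x hx
    rw [Multiset.mem_map] at hx
    obtain ⟨β, hβ, rfl⟩ := hx
    exact (hmem β hβ).2

lemma span_simples {v} (hv : RS.IsRegularPt v) :
    Submodule.span ℝ (simplesOf (RS.posOf v)) = ⊤ := by
  rw [eq_top_iff, ← RS.span_top]
  rw [Submodule.span_le]
  intro γ hγ
  have key : ∀ δ ∈ RS.posOf v, δ ∈ Submodule.span ℝ (simplesOf (RS.posOf v)) := by
    intro δ hδ
    obtain ⟨l, _, hmem, hsum⟩ := RS.exists_decomp hv δ hδ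
    rw [← hsum]
    exact multiset_sum_mem l fun β hβ => Submodule.subset_span (hmem β hβ)
  by_cases h : γ ∈ RS.posOf v
  · exact key γ h
  · have := key (-γ) (RS.neg_mem_posOf hv hγ h)
    have h2 := Submodule.neg_mem _ this
    rwa [neg_neg] at h2

end RootSystemData

set_option maxHeartbeats 1000000

namespace RootSystemData

variable {V : Type*} [AddCommGroup V] [Module ℝ V] [FiniteDimensional ℝ V]
variable (RS : RootSystemData V)

/-- Strict Cauchy–Schwarz for non-proportional roots. -/
lemma BB_sq_lt {β γ : Module.Dual ℝ V} (hβ : β ∈ RS.roots) (hγ : γ ∈ RS.roots)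
    (h1 : γ ≠ β) (h2 : γ ≠ -β) :
    RS.BB γ β ^ 2 < RS.BB γ γ * RS.BB β β := by
  have hβ0 : β ≠ 0 := RS.ne_zero β hβ
  have hBβ : 0 < RS.BB β β := RS.BB_posdef hβ0
  have hz0 : RS.BB β β • γ - RS.BB γ β • β ≠ 0 := by
    intro h0
    have hthis : RS.BB β β • γ = RS.BB γ β • β := by
      rw [← sub_eq_zero]; exact h0
    have hγeq : γ = ((RS.BB β β)⁻¹ * RS.BB γ β) • β := by
      have h' := congrArg (fun w => (RS.BB β β)⁻¹ • w) hthis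
      simp only [smul_smul, inv_mul_cancel₀ (ne_of_gt hBβ), one_smul] at h'
      exact h'
    have := RS.reduced β hβ ((RS.BB β β)⁻¹ * RS.BB γ β) (by rw [← hγeq]; exact hγ)
    rcases this with h | h
    · apply h1; rw [hγeq, h, one_smul]
    · apply h2; rw [hγeq, h]; module
  have hzz := RS.BB_posdef hz0
  have hexp : RS.BB (RS.BB β β • γ - RS.BB γ β • β) (RS.BB β β • γ - RS.BB γ β • β)
      = RS.BB β β * (RS.BB γ γ * RS.BB β β - RS.BB γ β ^ 2) := by
    have hs : RS.BB γ β = RS.BB β γ := RS.BB_symm γ β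
    simp only [map_sub, map_smul, LinearMap.sub_apply, LinearMap.smul_apply, smul_eq_mul]
    linear_combination (RS.BB β β * RS.BB γ β) * hs
  rw [hexp] at hzz
  nlinarith [hzz, hBβ]

/-- Key lemma: a simple reflection maps other positive roots to positive roots. -/
lemma reflE_simple_pos {v : V} (hv : RS.IsRegularPt v) {β γ : Module.Dual ℝ V}
    (hβ : β ∈ simplesOf (RS.posOf v)) (hγ : γ ∈ RS.posOf v) (hne : γ ≠ β) :
    RS.reflE β γ ∈ RS.posOf v := by
  have hβp : β ∈ RS.posOf v := hβ.1
  have hβr : β ∈ RS.roots := hβp.1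
  have hγr : γ ∈ RS.roots := hγ.1
  have hγnegβ : γ ≠ -β := by
    rintro rfl
    exact RS.notMem_posOf_neg hβp hγ
  by_contra hcon
  have hroot : RS.reflE β γ ∈ RS.roots := RS.reflE_mem hβr hγr
  have hδ : -(RS.reflE β γ) ∈ RS.posOf v := RS.neg_mem_posOf hv hroot hcon
  have hre : RS.reflE β γ = γ - γ (RS.coroot β) • β := RS.reflE_apply hβr γ
  -- k = γ(β̌) is a positive integer
  obtain ⟨n, hn⟩ := RS.crystallographic β hβr γ hγr
  have hδv : 0 < (-(RS.reflE β γ)) v := hδ.2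
  have hδveq : (-(RS.reflE β γ)) v = γ (RS.coroot β) * β v - γ v := by
    rw [hre]; simp [LinearMap.neg_apply, LinearMap.sub_apply, LinearMap.smul_apply]; try ring
  have hβv : 0 < β v := hβp.2
  have hγv : 0 < γ v := hγ.2
  have hk : 0 < γ (RS.coroot β) := by
    by_contra hk
    push_neg at hk
    nlinarith [hδv, hδveq]
  -- m = β(γ̌) is a positive integer
  obtain ⟨m, hm⟩ := RS.crystallographic γ hγr β hβr
  have hBβγ : 0 < RS.BB γ β := by
    have := RS.coroot_key hβr γ
    have hBβ : 0 < RS.BB β β := RS.BB_posdef (RS.ne_zero β hβr)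
    nlinarith
  have hmpos : 0 < β (RS.coroot γ) := by
    have := RS.coroot_key hγr β
    have hBγ : 0 < RS.BB γ γ := RS.BB_posdef (RS.ne_zero γ hγr)
    have hsym := RS.BB_symm β γ
    nlinarith
  have hcs := RS.BB_sq_lt hβr hγr hne hγnegβ
  have hkm : γ (RS.coroot β) * β (RS.coroot γ) < 4 := by
    have h1 := RS.coroot_key hβr γ
    have h2 := RS.coroot_key hγr β
    have hBβ : 0 < RS.BB β β := RS.BB_posdef (RS.ne_zero β hβr)
    have hBγ : 0 < RS.BB γ γ := RS.BB_posdef (RS.ne_zero γ hγr)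
    have hsym := RS.BB_symm β γ
    nlinarith
  have hn1 : 1 ≤ n := by
    by_contra h
    push_neg at h
    have : (n : ℝ) ≤ 0 := by exact_mod_cast Int.lt_add_one_iff.mp (by omega)
    rw [hn] at hk; linarith
  have hm1 : 1 ≤ m := by
    by_contra h
    push_neg at h
    have : (m : ℝ) ≤ 0 := by exact_mod_cast Int.lt_add_one_iff.mp (by omega)
    rw [hm] at hmpos; linarith
  have hnm : n * m < 4 := by
    have : ((n * m : ℤ) : ℝ) < 4 := by push_cast; rw [← hn, ← hm]; exact hkm
    exact_mod_cast this
  have hn3 : n ≤ 3 := by nlinarith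
  -- the contradiction machine: β is not a sum of two positive roots
  have hsimple := hβ.2
  have habs : ∀ x y : Module.Dual ℝ V, x ∈ RS.posOf v → y ∈ RS.posOf v → β = x + y → False := by
    intro x y hx hy hxy
    exact hsimple ⟨x, hx, y, hy, hxy⟩
  -- case n = 1
  rcases (by omega : n = 1 ∨ n = 2 ∨ n = 3) with h1 | h2 | h3
  · apply habs (-(RS.reflE β γ)) γ hδ hγ
    rw [hre, hn, h1]
    push_cast
    module
  · -- n = 2 or 3 forces m = 1
    have hm1' : m = 1 := by nlinarith
    have hβγroot : β - γ ∈ RS.roots := by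
      have := RS.reflect_mem γ hγr β hβr
      rwa [hm, hm1', Int.cast_one, one_smul] at this
    rcases Classical.em (β - γ ∈ RS.posOf v) with hbg | hbg
    · exact habs (β - γ) γ hbg hγ (by module)
    · have hgb : γ - β ∈ RS.posOf v := by
        have := RS.neg_mem_posOf hv hβγroot hbg
        rwa [neg_sub] at this
      apply habs (-(RS.reflE β γ)) (γ - β) hδ hgb
      rw [hre, hn, h2]
      push_cast
      module
  · have hm1' : m = 1 := by nlinarith
    have hβγroot : β - γ ∈ RS.roots := by
      have := RS.reflect_mem γ hγr β hβr
      rwa [hm, hm1', Int.cast_one, one_smul] at this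
    rcases Classical.em (β - γ ∈ RS.posOf v) with hbg | hbg
    · exact habs (β - γ) γ hbg hγ (by module)
    · have hgb : γ - β ∈ RS.posOf v := by
        have := RS.neg_mem_posOf hv hβγroot hbg
        rwa [neg_sub] at this
      have hηroot : γ - β ∈ RS.roots := hgb.1
      have hηcor : (γ - β) (RS.coroot β) = 1 := by
        have h2 := RS.root_coroot_two β hβr
        rw [LinearMap.sub_apply, hn, h3, h2]
        norm_num
      have hγ2βroot : γ - 2 • β ∈ RS.roots := by
        have := RS.reflect_mem β hβr (γ - β) hηroot
        rw [hηcor, one_smul] at this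
        convert this using 1
        module
      rcases Classical.em (γ - 2 • β ∈ RS.posOf v) with hg2 | hg2
      · apply habs (-(RS.reflE β γ)) (γ - 2 • β) hδ hg2
        rw [hre, hn, h3]
        push_cast
        module
      · have h2g : 2 • β - γ ∈ RS.posOf v := by
          have := RS.neg_mem_posOf hv hγ2βroot hg2
          rwa [neg_sub] at this
        exact habs (2 • β - γ) (γ - β) h2g hgb (by module)

end RootSystemData

namespace RootSystemData

variable {V : Type*} [AddCommGroup V] [Module ℝ V] [FiniteDimensional ℝ V]
variable (RS : RootSystemData V)

omit [FiniteDimensional ℝ V] in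
lemma sAff_zero_apply {β : Module.Dual ℝ V} (hβ : β ∈ RS.roots) (x : V) :
    RS.sAff β 0 x = x - β x • RS.coroot β := by
  rw [sAff, dif_pos (RS.root_coroot_two β hβ)]
  simp

omit [FiniteDimensional ℝ V] in
lemma sAff_zero_invol {β : Module.Dual ℝ V} (hβ : β ∈ RS.roots) (x : V) :
    RS.sAff β 0 (RS.sAff β 0 x) = x := by
  rw [RS.sAff_zero_apply hβ, RS.sAff_zero_apply hβ]
  have h2 := RS.root_coroot_two β hβ
  have hb : β (x - β x • RS.coroot β) = - β x := by
    rw [map_sub, map_smul, h2]; simp; ring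
  rw [hb]
  module

omit [FiniteDimensional ℝ V] in
lemma eval_reflE_pt {β : Module.Dual ℝ V} (hβ : β ∈ RS.roots) (γ : Module.Dual ℝ V) (v : V) :
    γ (v - β v • RS.coroot β) = (RS.reflE β γ) v := by
  rw [RS.reflE_apply hβ]
  simp only [map_sub, map_smul, LinearMap.sub_apply, LinearMap.smul_apply, smul_eq_mul]
  ring

omit [FiniteDimensional ℝ V] in
lemma regular_reflPt {v : V} (hv : RS.IsRegularPt v) {β : Module.Dual ℝ V}
    (hβ : β ∈ RS.roots) : RS.IsRegularPt (v - β v • RS.coroot β) := by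
  intro γ hγ
  rw [RS.eval_reflE_pt hβ]
  exact hv _ (RS.reflE_mem hβ hγ)

lemma posOf_reflPt {v : V} (hv : RS.IsRegularPt v) {β : Module.Dual ℝ V}
    (hβ : β ∈ simplesOf (RS.posOf v)) :
    RS.posOf (v - β v • RS.coroot β) = (RS.posOf v \ {β}) ∪ {-β} := by
  have hβr : β ∈ RS.roots := hβ.1.1
  ext γ
  simp only [Set.mem_union, Set.mem_diff, Set.mem_singleton_iff]
  constructor
  · rintro ⟨hγr, hγv⟩
    rw [RS.eval_reflE_pt hβr] at hγv
    have hrp : RS.reflE β γ ∈ RS.posOf v := ⟨RS.reflE_mem hβr hγr, hγv⟩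
    by_cases hc : RS.reflE β γ = β
    · right
      have := congrArg (RS.reflE β) hc
      rw [RS.reflE_invol hβr, RS.reflE_self hβr] at this
      exact this
    · left
      have hmem := RS.reflE_simple_pos hv hβ hrp hc
      rw [RS.reflE_invol hβr] at hmem
      refine ⟨hmem, ?_⟩
      rintro rfl
      rw [RS.reflE_self hβr] at hrp
      exact RS.notMem_posOf_neg hβ.1 hrp
  · rintro (⟨hγp, hne⟩ | rfl)
    · refine ⟨hγp.1, ?_⟩
      rw [RS.eval_reflE_pt hβr]
      exact (RS.reflE_simple_pos hv hβ hγp hne).2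
    · refine ⟨RS.neg_mem hβr, ?_⟩
      rw [RS.eval_reflE_pt hβr, map_neg, RS.reflE_self hβr, neg_neg]
      exact hβ.1.2

omit [FiniteDimensional ℝ V] in
lemma chamberSet_reflPt {v : V} {β : Module.Dual ℝ V} (hβr : β ∈ RS.roots) :
    RS.chamberSet (v - β v • RS.coroot β) = ⇑(RS.sAff β 0) '' RS.chamberSet v := by
  ext x
  constructor
  · intro hx
    refine ⟨RS.sAff β 0 x, ?_, RS.sAff_zero_invol hβr x⟩
    intro γ hγ hγv
    have hδr := RS.reflE_mem hβr hγ
    have hδv : 0 < (RS.reflE β γ) (v - β v • RS.coroot β) := by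
      rw [RS.eval_reflE_pt hβr, RS.reflE_invol hβr]
      exact hγv
    have := hx _ hδr hδv
    rw [RS.sAff_zero_apply hβr, RS.eval_reflE_pt hβr]
    exact this
  · rintro ⟨y, hy, rfl⟩
    intro γ hγ hγv'
    rw [RS.sAff_zero_apply hβr, RS.eval_reflE_pt hβr]
    rw [RS.eval_reflE_pt hβr] at hγv'
    exact hy _ (RS.reflE_mem hβr hγ) hγv'

omit [FiniteDimensional ℝ V] in
lemma chamberSet_eq_of_posOf_eq {v w : V} (h : RS.posOf v = RS.posOf w) :
    RS.chamberSet v = RS.chamberSet w := by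
  ext x
  constructor
  · intro hx γ hγ hγw
    have : γ ∈ RS.posOf v := by rw [h]; exact ⟨hγ, hγw⟩
    exact hx γ hγ this.2
  · intro hx γ hγ hγv
    have : γ ∈ RS.posOf w := by rw [← h]; exact ⟨hγ, hγv⟩
    exact hx γ hγ this.2

/-- The relation `γ(ψ̌) = c·B(γ,ψ)` for the fundamental pair `(ψ, ψ̌)`. -/
lemma fund_sign (C₂ : RS.ChamberT) {ψ : Module.Dual ℝ V} {ψv : V}
    (hfp : RS.IsFundPair C₂.1 ψ ψv) :
    ∃ c : ℝ, 0 < c ∧ ∀ γ : Module.Dual ℝ V, γ ψv = c * RS.BB γ ψ := by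
  obtain ⟨α₀, hP, hCo⟩ := hfp
  obtain ⟨v₂, hv₂, hC₂eq⟩ := RS.chamber_witness C₂
  have hsimp : RS.simples C₂.1 = simplesOf (RS.posOf v₂) := by
    rw [simples, hC₂eq, pos_chamberSet]
  have hα₀s : α₀ ∈ simplesOf (RS.posOf v₂) := by rw [← hsimp]; exact hP.1
  have hα₀r : α₀ ∈ RS.roots := hα₀s.1.1
  have hB₀ : 0 < RS.BB α₀ α₀ := RS.BB_posdef (RS.ne_zero α₀ hα₀r)
  refine ⟨2 / RS.BB α₀ α₀, by positivity, ?_⟩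
  have hFG : (Module.Dual.eval ℝ V ψv) = (2 / RS.BB α₀ α₀) • (RS.BB.flip ψ) := by
    apply LinearMap.ext_on (RS.span_simples hv₂)
    intro δ hδ
    have hδr : δ ∈ RS.roots := hδ.1.1
    have hδ0 : 0 < RS.BB δ δ := RS.BB_posdef (RS.ne_zero δ hδr)
    have hδC : δ ∈ RS.simples C₂.1 := by rw [hsimp]; exact hδ
    have hco := hCo.2 δ hδC
    have hpa := hP.2 δ hδC
    have hkey := RS.coroot_key hδr ψ
    have hev : (Module.Dual.eval ℝ V ψv) δ = δ ψv := rfl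
    have hflip : ((2 / RS.BB α₀ α₀) • (RS.BB.flip ψ)) δ = (2 / RS.BB α₀ α₀) * RS.BB δ ψ := rfl
    rw [hev, hflip, hco]
    have hsym : RS.BB δ ψ = RS.BB ψ δ := RS.BB_symm δ ψ
    by_cases hδα : δ = α₀
    · subst hδα
      rw [if_pos rfl] at hpa ⊢
      rw [hpa] at hkey
      rw [hsym]
      field_simp
      linarith
    · rw [if_neg hδα] at hpa ⊢
      rw [hpa] at hkey
      rw [hsym]
      have : RS.BB ψ δ = 0 := by nlinarith
      rw [this]
      ring
  intro γ
  have := LinearMap.congr_fun hFG γ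
  simpa using this

/-- Roots pairing positively with `ψ̌` are `C₂`-positive. -/
lemma fund_pos_subset (C₂ : RS.ChamberT) {ψ : Module.Dual ℝ V} {ψv : V}
    (hfp : RS.IsFundPair C₂.1 ψ ψv) {v₂ : V} (hv₂ : RS.IsRegularPt v₂)
    (hC₂eq : C₂.1 = RS.chamberSet v₂) :
    ∀ γ ∈ RS.roots, 0 < γ ψv → γ ∈ RS.posOf v₂ := by
  obtain ⟨α₀, hP, hCo⟩ := hfp
  have hsimp : RS.simples C₂.1 = simplesOf (RS.posOf v₂) := by
    rw [simples, hC₂eq, pos_chamberSet]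
  have hnn : ∀ δ ∈ RS.posOf v₂, 0 ≤ δ ψv := by
    intro δ hδ
    obtain ⟨l, hlne, hlmem, hlsum⟩ := RS.exists_decomp hv₂ δ hδ
    have : δ ψv = (l.map (fun β : Module.Dual ℝ V => β ψv)).sum := by
      rw [← hlsum, multiset_sum_eval]
    rw [this]
    apply Multiset.sum_nonneg
    intro a ha
    rw [Multiset.mem_map] at ha
    obtain ⟨β, hβ, rfl⟩ := ha
    have hβC : β ∈ RS.simples C₂.1 := by rw [hsimp]; exact hlmem β hβ
    rw [hCo.2 β hβC]
    split <;> norm_num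
  intro γ hγ hγψ
  by_contra h
  have := hnn (-γ) (RS.neg_mem_posOf hv₂ hγ h)
  rw [LinearMap.neg_apply] at this
  linarith

end RootSystemData

namespace RootSystemData

variable {V : Type*} [AddCommGroup V] [Module ℝ V] [FiniteDimensional ℝ V]
variable (RS : RootSystemData V)

/-- Gallery argument: `ψ(μ_C)` is constant on chambers containing all `ψ̌`-positive roots. -/
lemma gallery (μ : RS.ChamberT → V) (hq : RS.QuasiAdmissibleV μ)
    (C₂ : RS.ChamberT) {ψ : Module.Dual ℝ V} {ψv : V} (hfp : RS.IsFundPair C₂.1 ψ ψv) :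
    ∀ C : RS.ChamberT, (∀ γ ∈ RS.roots, 0 < γ ψv → γ ∈ RS.pos C.1) →
      ψ (μ C) = ψ (μ C₂) := by
  obtain ⟨v₂, hv₂, hC₂eq⟩ := RS.chamber_witness C₂
  obtain ⟨cψ, hcψ, hsign⟩ := RS.fund_sign C₂ hfp
  have hpos₂ := RS.fund_pos_subset C₂ hfp hv₂ hC₂eq
  have hψ0 : ∀ β ∈ RS.roots, β ψv = 0 → ψ (RS.coroot β) = 0 := by
    intro β hβ h0
    have hkey := RS.coroot_key hβ ψ
    have hB : 0 < RS.BB β β := RS.BB_posdef (RS.ne_zero β hβ)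
    have h1 : RS.BB β ψ = 0 := by
      have := hsign β
      nlinarith
    have hsym : RS.BB ψ β = RS.BB β ψ := RS.BB_symm ψ β
    nlinarith
  have hpos₂' : RS.pos C₂.1 = RS.posOf v₂ := by rw [hC₂eq, pos_chamberSet]
  suffices key : ∀ n : ℕ, ∀ C : RS.ChamberT,
      (∀ γ ∈ RS.roots, 0 < γ ψv → γ ∈ RS.pos C.1) →
      (RS.pos C.1 \ RS.pos C₂.1).ncard = n → ψ (μ C) = ψ (μ C₂) by
    intro C h
    exact key _ C h rfl
  intro n
  induction n using Nat.strong_induction_on with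
  | _ n ih =>
    intro C hsub hn
    obtain ⟨v, hv, hCeq⟩ := RS.chamber_witness C
    have hposC : RS.pos C.1 = RS.posOf v := by rw [hCeq, pos_chamberSet]
    by_cases hpp : RS.posOf v = RS.posOf v₂
    · have hCC : C = C₂ := by
        apply Subtype.ext
        rw [hCeq, hC₂eq]
        exact RS.chamberSet_eq_of_posOf_eq hpp
      rw [hCC]
    · have hex : ∃ β ∈ simplesOf (RS.posOf v), β ∉ RS.posOf v₂ := by
        by_contra h
        push_neg at h
        apply hpp
        have h1 : RS.posOf v ⊆ RS.posOf v₂ := by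
          intro γ hγ
          obtain ⟨l, hlne, hlmem, hlsum⟩ := RS.exists_decomp hv γ hγ
          exact RS.root_sum_mem hγ.1 l hlne (fun β hβ => h β (hlmem β hβ)) hlsum
        ext γ
        constructor
        · exact fun hγ => h1 hγ
        · intro hγ2
          by_contra hγ1
          exact RS.notMem_posOf_neg hγ2 (h1 (RS.neg_mem_posOf hv hγ2.1 hγ1))
      obtain ⟨β, hβs, hβnot⟩ := hex
      have hβr : β ∈ RS.roots := hβs.1.1
      have hβψ : β ψv = 0 := by
        rcases lt_trichotomy (β ψv) 0 with h1 | h1 | h1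
        · exfalso
          have hm : -β ∈ RS.pos C.1 :=
            hsub (-β) (RS.neg_mem hβr) (by rw [LinearMap.neg_apply]; linarith)
          rw [hposC] at hm
          exact RS.notMem_posOf_neg hβs.1 hm
        · exact h1
        · exact absurd (hpos₂ β hβr h1) hβnot
      have hv' := RS.regular_reflPt hv hβr
      set C' : RS.ChamberT := ⟨RS.chamberSet (v - β v • RS.coroot β),
        RS.isChamber_chamberSet hv'⟩ with hC'def
      have hC'img : C'.1 = ⇑(RS.sAff β 0) '' C.1 := by
        rw [hCeq]
        exact RS.chamberSet_reflPt hβr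
      have hβsimpC : β ∈ RS.simples C.1 := by
        show β ∈ simplesOf (RS.pos C.1)
        rw [hposC]
        exact hβs
      obtain ⟨c, hc⟩ := hq C β hβsimpC C' hC'img
      have hψμ : ψ (μ C) = ψ (μ C') := by
        have hφ := congrArg ψ hc
        rw [map_sub, map_smul, hψ0 β hβr hβψ] at hφ
        simp only [smul_eq_mul, mul_zero] at hφ
        linarith
      have hposC' : RS.pos C'.1 = (RS.posOf v \ {β}) ∪ {-β} := by
        show RS.pos (RS.chamberSet _) = _
        rw [pos_chamberSet]
        exact RS.posOf_reflPt hv hβs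
      have hsub' : ∀ γ ∈ RS.roots, 0 < γ ψv → γ ∈ RS.pos C'.1 := by
        intro γ hγ hγψ
        rw [hposC']
        left
        refine ⟨by rw [← hposC]; exact hsub γ hγ hγψ, ?_⟩
        intro hγβ
        rw [hγβ, hβψ] at hγψ
        exact lt_irrefl _ hγψ
      have hnegβ : -β ∈ RS.posOf v₂ := RS.neg_mem_posOf hv₂ hβr hβnot
      have hSeq : RS.pos C'.1 \ RS.pos C₂.1 = (RS.pos C.1 \ RS.pos C₂.1) \ {β} := by
        rw [hposC', hposC, hpos₂']
        ext γ
        simp only [Set.mem_diff, Set.mem_union, Set.mem_singleton_iff]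
        constructor
        · rintro ⟨h1 | h1, h2⟩
          · exact ⟨⟨h1.1, h2⟩, h1.2⟩
          · exact absurd hnegβ (h1 ▸ h2)
        · rintro ⟨⟨h1, h2⟩, h3⟩
          exact ⟨Or.inl ⟨h1, h3⟩, h2⟩
      have hβmem : β ∈ RS.pos C.1 \ RS.pos C₂.1 := by
        rw [hposC, hpos₂']
        exact ⟨hβs.1, hβnot⟩
      have hfinS : (RS.pos C.1 \ RS.pos C₂.1).Finite :=
        RS.finite.subset (by intro γ h; rw [hposC] at h; exact h.1.1)
      have hlt : (RS.pos C'.1 \ RS.pos C₂.1).ncard < n := by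
        rw [hSeq, ← hn]
        exact Set.ncard_diff_singleton_lt_of_mem hβmem hfinS
      rw [hψμ]
      exact ih _ hlt C' hsub' rfl

end RootSystemData

section PointAux

variable {V : Type*} [AddCommGroup V] [Module ℝ V]

lemma exists_nonvanishing (S : Finset (Module.Dual ℝ V)) (hS : ∀ f ∈ S, f ≠ 0) :
    ∃ u : V, ∀ f ∈ S, f u ≠ 0 := by
  classical
  induction S using Finset.induction_on with
  | empty => exact ⟨0, by simp⟩
  | @insert f s hf ih =>
    obtain ⟨u, hu⟩ := ih fun g hg => hS g (Finset.mem_insert_of_mem hg)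
    have hf0 : f ≠ 0 := hS f (Finset.mem_insert_self f s)
    have hw : ∃ w : V, f w ≠ 0 := by
      by_contra h
      push_neg at h
      exact hf0 (LinearMap.ext fun w => h w)
    obtain ⟨w, hw⟩ := hw
    set bad : Finset ℝ :=
      ((insert f s).filter (fun g => g w ≠ 0)).image (fun g => -(g u) / (g w)) with hbad
    obtain ⟨t, ht⟩ := Infinite.exists_notMem_finset bad
    refine ⟨u + t • w, ?_⟩
    intro g hg
    rcases Finset.mem_insert.1 hg with rfl | hgs
    · intro h0
      rw [map_add, map_smul, smul_eq_mul] at h0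
      apply ht
      rw [hbad]
      refine Finset.mem_image.2 ⟨g, Finset.mem_filter.2 ⟨Finset.mem_insert_self g s, hw⟩, ?_⟩
      field_simp
      linarith
    · intro h0
      rw [map_add, map_smul, smul_eq_mul] at h0
      by_cases hgw : g w = 0
      · rw [hgw, mul_zero, add_zero] at h0
        exact hu g hgs h0
      · apply ht
        rw [hbad]
        refine Finset.mem_image.2 ⟨g, Finset.mem_filter.2 ⟨Finset.mem_insert_of_mem hgs, hgw⟩, ?_⟩
        field_simp
        linarith

lemma exists_riesz [FiniteDimensional ℝ V] (f : Module.Dual ℝ (Module.Dual ℝ V)) :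
    ∃ a : V, ∀ γ : Module.Dual ℝ V, γ a = f γ :=
  ⟨(Module.evalEquiv ℝ V).symm f, fun γ => Module.apply_evalEquiv_symm_apply ℝ V γ f⟩

end PointAux

namespace RootSystemData

variable {V : Type*} [AddCommGroup V] [Module ℝ V] [FiniteDimensional ℝ V]
variable (RS : RootSystemData V)

/-- Construction of a chamber adapted to `ψ̌` and `α`. -/
lemma exists_good_chamber (ψv : V) {α : Module.Dual ℝ V} (hα : α ∈ RS.roots) :
    ∃ v : V, RS.IsRegularPt v ∧
      (∀ β ∈ RS.roots, 0 < β ψv → β ∈ RS.posOf v) ∧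
      (∀ β ∈ RS.posOf v, 0 ≤ β ψv) ∧
      (∀ β ∈ RS.posOf v, β ψv = 0 → α (RS.coroot β) ≤ 0) := by
  classical
  obtain ⟨aα, haα⟩ := exists_riesz (RS.BB.flip α)
  have haα' : ∀ β : Module.Dual ℝ V, β aα = RS.BB β α := fun β => haα β
  set ZF : Finset (Module.Dual ℝ V) := RS.finite.toFinset.filter (fun β => β ψv = 0) with hZF
  have hZroots : ∀ β ∈ ZF, β ∈ RS.roots ∧ β ψv = 0 := by
    intro β hβ
    rw [hZF, Finset.mem_filter, Set.Finite.mem_toFinset] at hβ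
    exact hβ
  obtain ⟨u₀, hu₀⟩ := exists_nonvanishing ZF (fun β hβ => RS.ne_zero β (hZroots β hβ).1)
  set CF : Finset ℝ := (ZF.filter (fun β => RS.BB β α ≠ 0)).image
    (fun β => |RS.BB β α| / (|β u₀| + 1)) with hCF
  set ε : ℝ := (insert (1:ℝ) CF).min' (Finset.insert_nonempty _ _) with hεdef
  have hεpos : 0 < ε := by
    have hmem := (insert (1:ℝ) CF).min'_mem (Finset.insert_nonempty _ _)
    rw [← hεdef] at hmem
    rcases Finset.mem_insert.1 hmem with h | h
    · rw [h]; norm_num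
    · rw [hCF] at h
      obtain ⟨β, hβ, hβeq⟩ := Finset.mem_image.1 h
      rw [Finset.mem_filter] at hβ
      rw [← hβeq]
      have h1 : 0 < |RS.BB β α| := abs_pos.2 hβ.2
      positivity
  have hεb : ∀ β ∈ RS.roots, β ψv = 0 → RS.BB β α ≠ 0 → ε * |β u₀| < |RS.BB β α| := by
    intro β hβr hβψ hBne
    have hβZF : β ∈ ZF := by
      rw [hZF, Finset.mem_filter, Set.Finite.mem_toFinset]
      exact ⟨hβr, hβψ⟩
    have hle : ε ≤ |RS.BB β α| / (|β u₀| + 1) := by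
      apply Finset.min'_le
      apply Finset.mem_insert_of_mem
      rw [hCF]
      exact Finset.mem_image.2 ⟨β, Finset.mem_filter.2 ⟨hβZF, hBne⟩, rfl⟩
    have hd : (0:ℝ) ≤ |β u₀| := abs_nonneg _
    have hB : 0 < |RS.BB β α| := abs_pos.2 hBne
    have hq : |RS.BB β α| / (|β u₀| + 1) * (|β u₀| + 1) = |RS.BB β α| :=
      div_mul_cancel₀ _ (by linarith)
    have hq0 : 0 < |RS.BB β α| / (|β u₀| + 1) := by positivity
    nlinarith [mul_nonneg (sub_nonneg.2 hle) hd]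
  set u : V := ε • u₀ - aα with hudef
  have hueval : ∀ β : Module.Dual ℝ V, β u = ε * β u₀ - RS.BB β α := by
    intro β
    rw [hudef, map_sub, map_smul, smul_eq_mul, haα' β]
  have hu_ne : ∀ β ∈ RS.roots, β ψv = 0 → β u ≠ 0 := by
    intro β hβr hβψ
    rw [hueval]
    by_cases hB : RS.BB β α = 0
    · rw [hB, sub_zero]
      have hβZF : β ∈ ZF := by
        rw [hZF, Finset.mem_filter, Set.Finite.mem_toFinset]
        exact ⟨hβr, hβψ⟩
      exact mul_ne_zero (ne_of_gt hεpos) (hu₀ β hβZF)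
    · intro h0
      have : ε * β u₀ = RS.BB β α := by linarith
      have habs : ε * |β u₀| = |RS.BB β α| := by
        rw [← abs_of_pos hεpos, ← abs_mul, this]
      have := hεb β hβr hβψ hB
      linarith
  have hu_sign : ∀ β ∈ RS.roots, β ψv = 0 → 0 < β u → RS.BB β α ≤ 0 := by
    intro β hβr hβψ hβu
    by_contra hB
    push_neg at hB
    rw [hueval] at hβu
    have h1 : ε * β u₀ ≤ ε * |β u₀| :=
      mul_le_mul_of_nonneg_left (le_abs_self _) (le_of_lt hεpos)
    have h2 := hεb β hβr hβψ (ne_of_gt hB)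
    rw [abs_of_pos hB] at h2
    linarith
  -- choose t
  set TF : Finset (Module.Dual ℝ V) := RS.finite.toFinset.filter (fun β => 0 < β ψv) with hTF
  set t : ℝ := (insert (1:ℝ) (TF.image (fun β => (1 + |β u|) / (β ψv)))).max'
    (Finset.insert_nonempty _ _) with htdef
  have hbt : ∀ β ∈ RS.roots, 0 < β ψv → 1 ≤ β (t • ψv + u) := by
    intro β hβr hβψ
    have hβTF : β ∈ TF := by
      rw [hTF, Finset.mem_filter, Set.Finite.mem_toFinset]
      exact ⟨hβr, hβψ⟩
    have hle : (1 + |β u|) / (β ψv) ≤ t := by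
      apply Finset.le_max'
      apply Finset.mem_insert_of_mem
      exact Finset.mem_image.2 ⟨β, hβTF, rfl⟩
    have ht1 : 1 + |β u| ≤ t * β ψv := by
      rw [div_le_iff₀ hβψ] at hle
      linarith
    have heval : β (t • ψv + u) = t * β ψv + β u := by
      rw [map_add, map_smul, smul_eq_mul]
    rw [heval]
    have := neg_abs_le (β u)
    linarith
  refine ⟨t • ψv + u, ?_, ?_, ?_, ?_⟩
  · intro β hβr
    rcases lt_trichotomy (β ψv) 0 with h1 | h1 | h1
    · have hneg : 0 < (-β) ψv := by rw [LinearMap.neg_apply]; linarith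
      have := hbt (-β) (RS.neg_mem hβr) hneg
      rw [LinearMap.neg_apply] at this
      intro h0
      rw [h0] at this
      linarith
    · have heval : β (t • ψv + u) = β u := by
        rw [map_add, map_smul, smul_eq_mul, h1, mul_zero, zero_add]
      rw [heval]
      exact hu_ne β hβr h1
    · have := hbt β hβr h1
      intro h0
      rw [h0] at this
      linarith
  · intro β hβr hβψ
    exact ⟨hβr, by linarith [hbt β hβr hβψ]⟩
  · rintro β ⟨hβr, hβv⟩
    by_contra h
    push_neg at h
    have hneg : 0 < (-β) ψv := by rw [LinearMap.neg_apply]; linarith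
    have := hbt (-β) (RS.neg_mem hβr) hneg
    rw [LinearMap.neg_apply] at this
    linarith
  · rintro β ⟨hβr, hβv⟩ hβψ
    have heval : β (t • ψv + u) = β u := by
      rw [map_add, map_smul, smul_eq_mul, hβψ, mul_zero, zero_add]
    rw [heval] at hβv
    have hBβα : RS.BB β α ≤ 0 := hu_sign β hβr hβψ hβv
    have hkey := RS.coroot_key hβr α
    have hBβ : 0 < RS.BB β β := RS.BB_posdef (RS.ne_zero β hβr)
    have hsym : RS.BB α β = RS.BB β α := RS.BB_symm α β
    nlinarith
end RootSystemData


/-- Lemma 1.20: let `μ̄ ∈ V^𝒞` be a regular quasi-admissible tuple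
and `ψ ∈ Ψ` (with fundamental coweight `ψv`, say `ψ ∈ Ψ_{C₂}`). Then for every
`x ∈ V^{≤μ̄}` and `α ∈ Φ` with `⟨α, ψ̌⟩ > 0` and `⟨ψ, x⟩ = μ_ψ = ⟨ψ, μ_{C₂}⟩`,
one has `⟨α, x⟩ > 0`. -/
theorem stmt12 {V : Type*} [AddCommGroup V] [Module ℝ V] [FiniteDimensional ℝ V]
    (RS : RootSystemData V)
    (μ : RS.ChamberT → V) (hq : RS.QuasiAdmissibleV μ) (hreg : RS.RegularV μ)
    (ψ : Module.Dual ℝ V) (ψv : V)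
    (C₂ : RS.ChamberT) (hfp : RS.IsFundPair C₂.1 ψ ψv)
    (x : V) (hx : ∀ C : RS.ChamberT, RS.vecLE (RS.pos C.1) x (μ C))
    (α : Module.Dual ℝ V) (hα : α ∈ RS.roots)
    (hαψ : 0 < α ψv) (hψx : ψ x = ψ (μ C₂)) :
    0 < α x := by
  classical
  obtain ⟨m, hm, hra⟩ := hreg
  obtain ⟨vst, hvreg, hsubst, hnn, hneg⟩ := RS.exists_good_chamber ψv hα
  set Cst : RS.ChamberT := ⟨RS.chamberSet vst, RS.isChamber_chamberSet hvreg⟩ with hCstdef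
  have hposCst : RS.pos Cst.1 = RS.posOf vst := RS.pos_chamberSet vst
  have hsub : ∀ γ ∈ RS.roots, 0 < γ ψv → γ ∈ RS.pos Cst.1 := by
    intro γ hγ hγψ
    rw [hposCst]
    exact hsubst γ hγ hγψ
  have hgal : ψ (μ Cst) = ψ (μ C₂) := RS.gallery μ hq C₂ hfp Cst hsub
  have hαpos : α ∈ RS.pos Cst.1 := by
    rw [hposCst]
    exact hsubst α hα hαψ
  have hmα : m ≤ α (μ Cst) := hra Cst α hαpos
  obtain ⟨cψ, hcψ, hsign⟩ := RS.fund_sign C₂ hfp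
  rcases hx Cst with heq | hlt
  · rw [heq]
    linarith
  · obtain ⟨s, c, hne, hmem, hsum⟩ := hlt
    have hψsum : ∑ β ∈ s, c β * ψ (RS.coroot β) = 0 := by
      have h1 := congrArg ψ hsum
      rw [map_sub, hgal, hψx, map_sum] at h1
      simp only [map_smul, smul_eq_mul] at h1
      linarith [h1]
    have hterm : ∀ β ∈ s, 0 ≤ c β * ψ (RS.coroot β) := by
      intro β hβ
      obtain ⟨⟨hβr, hβpos⟩, hcβ⟩ := hmem β hβ
      have hβp : β ∈ RS.posOf vst := by rw [← hposCst]; exact hβpos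
      have h0 : 0 ≤ β ψv := hnn β hβp
      have hkey := RS.coroot_key hβr ψ
      have hBβ : 0 < RS.BB β β := RS.BB_posdef (RS.ne_zero β hβr)
      have hsym : RS.BB ψ β = RS.BB β ψ := RS.BB_symm ψ β
      have hBβψ : 0 ≤ RS.BB β ψ := by nlinarith [hsign β]
      have hψc : 0 ≤ ψ (RS.coroot β) := by nlinarith
      exact mul_nonneg (le_of_lt hcβ) hψc
    have hzero : ∀ β ∈ s, c β * ψ (RS.coroot β) = 0 :=
      (Finset.sum_eq_zero_iff_of_nonneg hterm).1 hψsum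
    have hαcor : ∀ β ∈ s, α (RS.coroot β) ≤ 0 := by
      intro β hβ
      obtain ⟨⟨hβr, hβpos⟩, hcβ⟩ := hmem β hβ
      have hβp : β ∈ RS.posOf vst := by rw [← hposCst]; exact hβpos
      have hψc0 : ψ (RS.coroot β) = 0 := by
        rcases mul_eq_zero.1 (hzero β hβ) with h | h
        · exact absurd h (ne_of_gt hcβ)
        · exact h
      have hkey := RS.coroot_key hβr ψ
      have hsym : RS.BB ψ β = RS.BB β ψ := RS.BB_symm ψ β
      have hBψβ : RS.BB ψ β = 0 := by
        rw [hψc0, zero_mul] at hkey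
        linarith
      have hβψ0 : β ψv = 0 := by
        rw [hsign β, ← hsym, hBψβ, mul_zero]
      exact hneg β hβp hβψ0
    have hsumle : ∑ β ∈ s, c β * α (RS.coroot β) ≤ 0 := by
      apply Finset.sum_nonpos
      intro β hβ
      have h1 := (hmem β hβ).2
      have h2 := hαcor β hβ
      nlinarith
    have hαx := congrArg α hsum
    rw [map_sub, map_sum] at hαx
    simp only [map_smul, smul_eq_mul] at hαx
    linarith
end
end
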